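/- For every prime power q ≥ 7, the minimum distance of the toric code C_{P_6^(2)} over 𝔽_q equals (q-1)² − 4(q-1), where P_6^(2) = conv{(0,0),(4,0),(0,1)}. -/

import Mathlib

/-- Embed a lattice point of `ℤ²` into the real plane. -/
def toRealPt (p : ℤ × ℤ) : ℝ × ℝ := ((p.1 : ℝ), (p.2 : ℝ))

/-- The lattice points of the (possibly degenerate) convex lattice polygon spanned by a
finite set `V` of points of `ℤ²`, i.e. the points of `ℤ²` lying in the convex hull of `V`. -/
def latticePts (V : Finset (ℤ × ℤ)) : Set (ℤ × ℤ) :=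
  {p | toRealPt p ∈ convexHull ℝ (toRealPt '' (V : Set (ℤ × ℤ)))}

/-- The integer affine map `T(x) = Mx + v` on `ℤ²`. -/
def affMap (M : Matrix (Fin 2) (Fin 2) ℤ) (v : ℤ × ℤ) (p : ℤ × ℤ) : ℤ × ℤ :=
  (M 0 0 * p.1 + M 0 1 * p.2 + v.1, M 1 0 * p.1 + M 1 1 * p.2 + v.2)

/-- Two subsets of `ℤ²` are lattice equivalent if some affine map `T(x) = Mx + v`,
with `M ∈ GL(2,ℤ)` and `v ∈ ℤ²`, maps the first bijectively onto the second. -/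
def LatticeEquiv (S S' : Set (ℤ × ℤ)) : Prop :=
  ∃ (M : Matrix (Fin 2) (Fin 2) ℤ) (v : ℤ × ℤ),
    IsUnit M.det ∧ Set.BijOn (affMap M v) S S'

/-- Evaluation of the Laurent monomial `x^{m₁} y^{m₂}` at a point of the torus `(F*)²`. -/
def evalMonomial {F : Type*} [Field F] (m : ℤ × ℤ) (t : Fˣ × Fˣ) : F :=
  ((t.1 ^ m.1 : Fˣ) : F) * ((t.2 ^ m.2 : Fˣ) : F)

/-- The toric code over `F` associated to a set `S ⊆ ℤ²` of exponent vectors: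
the span of the evaluation vectors of the monomials `x^{m₁} y^{m₂}`, `m ∈ S`. -/
def toricCode (F : Type*) [Field F] (S : Set (ℤ × ℤ)) :
    Submodule F ((Fˣ × Fˣ) → F) :=
  Submodule.span F ((fun m => evalMonomial m) '' S)

/-- The Hamming weight of a word: the number of nonzero coordinates. -/
noncomputable def hammingWt {X F : Type*} [Zero F] (c : X → F) : ℕ :=
  Set.ncard {x | c x ≠ 0}

/-- The minimum distance of a linear code: the least Hamming weight of a nonzero codeword. -/
noncomputable def minDist {F X : Type*} [Field F] (C : Submodule F (X → F)) : ℕ :=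
  sInf {w | ∃ c ∈ C, c ≠ 0 ∧ hammingWt c = w}

/-- Monomial equivalence of linear codes inside `F^X`. -/
def MonomiallyEquiv {F X : Type*} [Field F] (C₁ C₂ : Submodule F (X → F)) : Prop :=
  ∃ (π : Equiv.Perm X) (d : X → Fˣ),
    (C₂ : Set (X → F)) = (fun c x => (d x : F) * c (π x)) '' (C₁ : Set (X → F))

/-- The vertex sets of the fourteen polygons `P₆⁽ⁱ⁾`, `i = 1, …, 14`. -/
def P6 : ℕ → Finset (ℤ × ℤ)
  | 1 => {(0,0),(5,0)}
  | 2 => {(0,0),(4,0),(0,1)}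
  | 3 => {(0,0),(3,0),(1,1),(0,1)}
  | 4 => {(0,-1),(3,0),(0,1)}
  | 5 => {(-1,-1),(3,0),(0,1)}
  | 6 => {(0,0),(1,0),(3,3),(0,1)}
  | 7 => {(0,0),(0,1),(3,0),(3,-1)}
  | 8 => {(-1,0),(0,1),(2,0),(0,-1)}
  | 9 => {(0,-1),(2,0),(1,1),(0,1)}
  | 10 => {(0,-1),(2,0),(-1,2)}
  | 11 => {(-1,-1),(1,0),(1,1),(0,2)}
  | 12 => {(-1,0),(0,-1),(1,0),(1,1),(0,1)}
  | 13 => {(0,0),(2,0),(0,2)}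
  | 14 => {(0,0),(2,0),(2,1),(0,1)}
  | _ => ∅

section Helpers

lemma convex_H' : Convex ℝ {p : ℝ × ℝ | 0 ≤ p.1 ∧ 0 ≤ p.2 ∧ p.1 + 4*p.2 ≤ 4} := by
  rintro ⟨x1,x2⟩ ⟨hx1,hx2,hx3⟩ ⟨y1,y2⟩ ⟨hy1,hy2,hy3⟩ a b ha hb hab
  refine ⟨?_, ?_, ?_⟩ <;> simp only [Prod.smul_mk, Prod.mk_add_mk, smul_eq_mul] <;> nlinarith

lemma seg_mem' (k : ℝ) (h0 : 0 ≤ k) (h4 : k ≤ 4) :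
    ((k, 0) : ℝ × ℝ) ∈ segment ℝ ((0,0) : ℝ × ℝ) ((4,0) : ℝ × ℝ) := by
  refine ⟨1 - k/4, k/4, by linarith, by linarith, by ring, ?_⟩
  simp only [Prod.smul_mk, Prod.mk_add_mk, smul_eq_mul]
  norm_num

/-- The lattice points of `P₆⁽²⁾`. -/
def S6set : Set (ℤ × ℤ) := {(0,0),(1,0),(2,0),(3,0),(4,0),(0,1)}

lemma latticePts_P62 : latticePts {(0,0),(4,0),(0,1)} = S6set := by
  have himg : toRealPt '' (({(0,0),(4,0),(0,1)} : Finset (ℤ×ℤ)) : Set (ℤ × ℤ))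
      = {((0:ℝ),(0:ℝ)),(4,0),(0,1)} := by
    rw [show (({(0,0),(4,0),(0,1)} : Finset (ℤ×ℤ)) : Set (ℤ×ℤ)) = {(0,0),(4,0),(0,1)} by
      simp]
    simp only [Set.image_insert_eq, Set.image_singleton, toRealPt]
    norm_num
  ext ⟨a,b⟩
  simp only [latticePts, Set.mem_setOf_eq]
  rw [himg]
  constructor
  · intro h
    have hH := convexHull_min ?_ convex_H' h
    · simp only [toRealPt, Set.mem_setOf_eq] at hH
      obtain ⟨h1, h2, h3⟩ := hH
      have ha : 0 ≤ a := by exact_mod_cast h1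
      have hb : 0 ≤ b := by exact_mod_cast h2
      have hab : a + 4*b ≤ 4 := by exact_mod_cast h3
      simp only [S6set, Set.mem_insert_iff, Set.mem_singleton_iff, Prod.mk.injEq]
      omega
    · rintro p (rfl | rfl | rfl) <;> norm_num
  · intro h
    have h00 : ((0:ℝ),(0:ℝ)) ∈ convexHull ℝ ({((0:ℝ),(0:ℝ)),(4,0),(0,1)} : Set (ℝ×ℝ)) :=
      subset_convexHull ℝ _ (by norm_num)
    have h40 : ((4:ℝ),(0:ℝ)) ∈ convexHull ℝ ({((0:ℝ),(0:ℝ)),(4,0),(0,1)} : Set (ℝ×ℝ)) :=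
      subset_convexHull ℝ _ (by norm_num)
    have hseg : ∀ k : ℝ, 0 ≤ k → k ≤ 4 → ((k,(0:ℝ)) : ℝ×ℝ) ∈
        convexHull ℝ ({((0:ℝ),(0:ℝ)),(4,0),(0,1)} : Set (ℝ×ℝ)) := fun k hk hk' =>
      (convex_convexHull ℝ _).segment_subset h00 h40 (seg_mem' k hk hk')
    simp only [S6set, Set.mem_insert_iff, Set.mem_singleton_iff, Prod.mk.injEq] at h
    rcases h with ⟨rfl,rfl⟩|⟨rfl,rfl⟩|⟨rfl,rfl⟩|⟨rfl,rfl⟩|⟨rfl,rfl⟩|⟨rfl,rfl⟩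
    · simpa [toRealPt] using h00
    · simpa [toRealPt] using hseg 1 (by norm_num) (by norm_num)
    · simpa [toRealPt] using hseg 2 (by norm_num) (by norm_num)
    · simpa [toRealPt] using hseg 3 (by norm_num) (by norm_num)
    · simpa [toRealPt] using h40
    · simpa [toRealPt] using subset_convexHull ℝ _ (by norm_num)

variable {F : Type} [Field F]

lemma evalMon_nat' (k : ℕ) (t : Fˣ × Fˣ) :
    evalMonomial ((k:ℤ), 0) t = (t.1:F)^k := by
  simp [evalMonomial, zpow_natCast]

lemma evalMon_y' (t : Fˣ × Fˣ) : evalMonomial ((0:ℤ), (1:ℤ)) t = (t.2:F) := by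
  simp [evalMonomial]

lemma code_mem' (c : (Fˣ × Fˣ) → F) (hc : c ∈ toricCode F S6set) :
    ∃ (P : Polynomial F) (b : F), P.natDegree ≤ 4 ∧
      ∀ t : Fˣ × Fˣ, c t = Polynomial.eval (t.1:F) P + b * (t.2:F) := by
  rw [toricCode, S6set] at hc
  simp only [Set.image_insert_eq, Set.image_singleton, Submodule.mem_span_insert,
    Submodule.mem_span_singleton] at hc
  obtain ⟨a0, _, ⟨a1, _, ⟨a2, _, ⟨a3, _, ⟨a4, _, ⟨b, rfl⟩, rfl⟩, rfl⟩, rfl⟩, rfl⟩, rfl⟩ := hc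
  refine ⟨Polynomial.C a0 + Polynomial.C a1 * Polynomial.X + Polynomial.C a2 * Polynomial.X^2
    + Polynomial.C a3 * Polynomial.X^3 + Polynomial.C a4 * Polynomial.X^4, b, ?_, ?_⟩
  · compute_degree
  · intro t
    have h0 := evalMon_nat' (F := F) 0 t
    have h1 := evalMon_nat' (F := F) 1 t
    have h2 := evalMon_nat' (F := F) 2 t
    have h3 := evalMon_nat' (F := F) 3 t
    have h4 := evalMon_nat' (F := F) 4 t
    norm_num at h0 h1 h2 h3 h4
    simp only [Pi.add_apply, Pi.smul_apply, smul_eq_mul, h0, h1, h2, h3, h4, evalMon_y']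
    simp [Polynomial.eval_add, Polynomial.eval_mul, Polynomial.eval_pow]
    ring

lemma code_mem_of_poly' (P : Polynomial F) (hP : P.natDegree ≤ 4) :
    (fun t : Fˣ × Fˣ => Polynomial.eval (t.1:F) P) ∈ toricCode F S6set := by
  have key : (fun t : Fˣ × Fˣ => Polynomial.eval (t.1:F) P)
      = ∑ k ∈ Finset.range 5, P.coeff k • evalMonomial ((k:ℤ), (0:ℤ)) := by
    funext t
    rw [Polynomial.eval_eq_sum_range' (n := 5) (by omega) ((t.1:F))]
    rw [Finset.sum_apply]
    refine Finset.sum_congr rfl fun k _ => ?_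
    simp [evalMon_nat']
  rw [key]
  refine Submodule.sum_mem _ fun k hk =>
    Submodule.smul_mem _ _ (Submodule.subset_span ⟨((k:ℤ),0), ?_, rfl⟩)
  simp only [Finset.mem_range] at hk
  interval_cases k <;> simp [S6set]

end Helpers

theorem minDist_P6_2 (q : ℕ) (hq : IsPrimePow q) (hq7 : 7 ≤ q)
    (F : Type) [Field F] [Fintype F] (hF : Fintype.card F = q) :
    (minDist (toricCode F (latticePts (P6 2))) : ℤ)
      = ((q:ℤ) - 1)^2 - 4 * ((q:ℤ) - 1) := by
  classical
  have hP62 : latticePts (P6 2) = S6set := by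
    rw [show P6 2 = {(0,0),(4,0),(0,1)} from rfl]; exact latticePts_P62
  rw [hP62]
  have hcardU : Fintype.card Fˣ = q - 1 := by rw [Fintype.card_units, hF]
  have hwt : ∀ c : Fˣ × Fˣ → F,
      hammingWt c + (Finset.univ.filter (fun t => c t = 0)).card = (q-1)*(q-1) := by
    intro c
    have h1 : hammingWt c = (Finset.univ.filter (fun t => c t ≠ 0)).card := by
      rw [hammingWt, Set.ncard_eq_toFinset_card']; congr 1; ext t; simp
    rw [h1, add_comm, Finset.card_filter_add_card_filter_not, Finset.card_univ,
      Fintype.card_prod, hcardU]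
  have key45 : (q-1)*(q-5) + 4*(q-1) = (q-1)*(q-1) := by
    have h5 : q - 5 + 4 = q - 1 := by omega
    calc (q-1)*(q-5) + 4*(q-1) = (q-1)*((q-5)+4) := by ring
      _ = (q-1)*(q-1) := by rw [h5]
  -- lower bound on weights
  have lb : ∀ c ∈ toricCode F S6set, c ≠ 0 → (q-1)*(q-5) ≤ hammingWt c := by
    intro c hc hne
    obtain ⟨P, b, hdeg, hform⟩ := code_mem' c hc
    have hz : (Finset.univ.filter (fun t => c t = 0)).card ≤ 4 * (q-1) := by
      by_cases hb : b = 0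
      · have hPne : P ≠ 0 := by
          rintro rfl; apply hne; funext t; rw [hform t]; simp [hb]
        have hsub : (Finset.univ.filter (fun t : Fˣ × Fˣ => c t = 0)) ⊆
            (Finset.univ.filter (fun u : Fˣ => Polynomial.eval (u:F) P = 0)) ×ˢ
              Finset.univ := by
          intro t ht
          simp only [Finset.mem_filter, Finset.mem_univ, true_and] at ht
          have := hform t
          rw [ht, hb, zero_mul, add_zero] at this
          simp only [Finset.mem_product, Finset.mem_filter, Finset.mem_univ, true_and]
          exact ⟨this.symm, trivial⟩
        have hR : (Finset.univ.filter (fun u : Fˣ => Polynomial.eval (u:F) P = 0)).card ≤ 4 := by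
          have h1 : (Finset.univ.filter
              (fun u : Fˣ => Polynomial.eval (u:F) P = 0)).card ≤ P.roots.toFinset.card := by
            refine Finset.card_le_card_of_injOn (fun u => (u:F)) ?_ ?_
            · intro u hu
              simp only [Finset.mem_coe, Finset.mem_filter, Finset.mem_univ, true_and] at hu
              exact Multiset.mem_toFinset.2 (Polynomial.mem_roots'.2 ⟨hPne, hu⟩)
            · intro u _ u' _ h
              exact Units.ext h
          calc (Finset.univ.filter (fun u : Fˣ => Polynomial.eval (u:F) P = 0)).card
              ≤ P.roots.toFinset.card := h1
            _ ≤ Multiset.card P.roots := Multiset.toFinset_card_le _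
            _ ≤ P.natDegree := Polynomial.card_roots' P
            _ ≤ 4 := hdeg
        calc (Finset.univ.filter (fun t : Fˣ × Fˣ => c t = 0)).card
            ≤ _ := Finset.card_le_card hsub
          _ = (Finset.univ.filter (fun u : Fˣ => Polynomial.eval (u:F) P = 0)).card
              * Finset.univ.card := Finset.card_product _ _
          _ ≤ 4 * (q-1) := by
              rw [Finset.card_univ, hcardU]
              exact Nat.mul_le_mul_right _ hR
      · have h1 : (Finset.univ.filter (fun t : Fˣ × Fˣ => c t = 0)).card ≤ q - 1 := by
          rw [← hcardU, ← Finset.card_univ]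
          apply Finset.card_le_card_of_injOn (fun t => t.1) (fun _ _ => Finset.mem_univ _)
          intro t ht t' ht' h1
          simp only [Finset.coe_filter, Finset.mem_univ, true_and, Set.mem_setOf_eq] at ht ht'
          have e1 := hform t
          have e2 := hform t'
          rw [ht] at e1
          rw [ht'] at e2
          have hv : (t.2 : F) = (t'.2 : F) := by
            rw [show t.1 = t'.1 from h1] at e1
            have h3 : Polynomial.eval ((t'.1:F)) P + b * (t.2:F)
                = Polynomial.eval ((t'.1:F)) P + b * (t'.2:F) := by rw [← e1, ← e2]
            exact mul_left_cancel₀ hb (add_left_cancel h3)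
          exact Prod.ext h1 (Units.ext hv)
        omega
    have := hwt c
    omega
  -- the minimizing codeword
  obtain ⟨A, hAsub, hAcard⟩ := Finset.exists_subset_card_eq
    (s := (Finset.univ : Finset Fˣ)) (n := 4) (by rw [Finset.card_univ, hcardU]; omega)
  set P : Polynomial F := ∏ a ∈ A, (Polynomial.X - Polynomial.C (a:F)) with hPdef
  have hdeg : P.natDegree = 4 := by
    rw [hPdef, Polynomial.natDegree_prod _ _ (fun a _ => Polynomial.X_sub_C_ne_zero _)]
    simp [Polynomial.natDegree_X_sub_C, hAcard]
  set c0 : Fˣ × Fˣ → F := fun t => Polynomial.eval (t.1:F) P with hc0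
  have hmem : c0 ∈ toricCode F S6set := code_mem_of_poly' P (le_of_eq hdeg)
  have hzero_iff : ∀ t : Fˣ × Fˣ, c0 t = 0 ↔ t.1 ∈ A := by
    intro t
    rw [hc0]
    simp only [hPdef, Polynomial.eval_prod, Finset.prod_eq_zero_iff, Polynomial.eval_sub,
      Polynomial.eval_X, Polynomial.eval_C, sub_eq_zero]
    constructor
    · rintro ⟨a, ha, h⟩
      rwa [show t.1 = a from Units.ext h]
    · intro h; exact ⟨t.1, h, rfl⟩
  have hZ : (Finset.univ.filter (fun t => c0 t = 0)) = A ×ˢ Finset.univ := by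
    ext t
    simp [hzero_iff, Finset.mem_product]
  have hZcard : (Finset.univ.filter (fun t => c0 t = 0)).card = 4*(q-1) := by
    rw [hZ, Finset.card_product, hAcard, Finset.card_univ, hcardU]
  have hne : c0 ≠ 0 := by
    have hcompl : (Aᶜ : Finset Fˣ).Nonempty := by
      rw [← Finset.card_pos, Finset.card_compl, hcardU, hAcard]; omega
    obtain ⟨u, hu⟩ := hcompl
    rw [Finset.mem_compl] at hu
    intro h
    have := congrFun h (u, 1)
    rw [Pi.zero_apply] at this
    exact hu ((hzero_iff (u,1)).1 this)
  have hwtc0 : hammingWt c0 = (q-1)*(q-5) := by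
    have := hwt c0
    rw [hZcard] at this
    omega
  have hmd : minDist (toricCode F S6set) = (q-1)*(q-5) := by
    rw [minDist]
    apply le_antisymm
    · exact Nat.sInf_le ⟨c0, hmem, hne, hwtc0⟩
    · refine le_csInf ?_ ?_
      · exact ⟨(q-1)*(q-5), c0, hmem, hne, hwtc0⟩
      · rintro w ⟨c, hc, hcne, rfl⟩
        exact lb c hc hcne
  rw [hmd]
  rw [Nat.cast_mul, Nat.cast_sub (by omega : 1 ≤ q), Nat.cast_sub (by omega : 5 ≤ q)]
  push_cast
  ring
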